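/- For any integer M > 2m+1, the set X_M = { x ∈ [0,θ] \ ℚ : m ≤ ℓ_n(x) ≤ M for all n ≥ 1 } satisfies the upper dimension bound dim_H(X_M) ≤ 1 − (m/(M+2))·(1/log(2M(M+1)/m)). -/

import Mathlib

open Filter Real

noncomputable section

/-- The generalized Gauss map `T_θ`. -/
def gaussMap (θ : ℝ) (x : ℝ) : ℝ := if x = 0 then 0 else 1 / x - θ * ⌊1 / (θ * x)⌋

/-- The `n`-th digit (1-indexed) of the θ-expansion of `x`: `ℓ_n(x) = ⌊1/(θ·T_θ^{n−1}(x))⌋`. -/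
def digit (θ : ℝ) (x : ℝ) (n : ℕ) : ℤ := ⌊1 / (θ * (gaussMap θ)^[n - 1] x)⌋

/-- `S_{n,θ}(x)`, the sum of the first `n` digits. -/
def Sdig (θ : ℝ) (x : ℝ) (n : ℕ) : ℤ := ∑ k ∈ Finset.Icc 1 n, digit θ x k

/-- `L_{n,θ}(x)`, the maximum of the first `n` digits. -/
def Ldig (θ : ℝ) (x : ℝ) (n : ℕ) : ℤ :=
  if h : 1 ≤ n then (Finset.Icc 1 n).sup' (Finset.nonempty_Icc.mpr h) (digit θ x) else 0

/-- The ratio `L_{n,θ}(x)·log n·log log n / (S_{n,θ}(x) − L_{n,θ}(x))`. -/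
def ratioFun (θ : ℝ) (x : ℝ) (n : ℕ) : ℝ :=
  ((Ldig θ x n : ℝ) * Real.log n * Real.log (Real.log n)) /
    ((Sdig θ x n : ℝ) - (Ldig θ x n : ℝ))

/-- The level set `E_θ(α)` of irrationals in `[0,θ]` where the ratio tends to `α`. -/
def Eset (θ α : ℝ) : Set ℝ :=
  {x | x ∈ Set.Icc 0 θ ∧ Irrational x ∧
    Tendsto (fun n => ratioFun θ x n) atTop (nhds α)}

/-- The set `X_M` of irrationals in `[0,θ]` with all digits between `m` and `M`. -/
def XMset (θ : ℝ) (m M : ℕ) : Set ℝ :=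
  {x | x ∈ Set.Icc 0 θ ∧ Irrational x ∧
    ∀ n : ℕ, 1 ≤ n → (m : ℤ) ≤ digit θ x n ∧ digit θ x n ≤ (M : ℤ)}

namespace XMaux

def nest (θ : ℝ) : List ℕ → ℝ → ℝ
  | [], t => t
  | ℓ :: w, t => nest θ w (1 / (θ * ℓ + t))

@[simp] lemma nest_nil (θ t : ℝ) : nest θ [] t = t := rfl

lemma nest_cons (θ : ℝ) (ℓ : ℕ) (w : List ℕ) (t : ℝ) :
    nest θ (ℓ :: w) t = nest θ w (1 / (θ * ℓ + t)) := rfl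

def len (θ : ℝ) (w : List ℕ) (a b : ℝ) : ℝ := |nest θ w b - nest θ w a|

lemma len_comm (θ : ℝ) (w : List ℕ) (a b : ℝ) : len θ w a b = len θ w b a :=
  abs_sub_comm _ _

lemma len_nonneg (θ : ℝ) (w : List ℕ) (a b : ℝ) : 0 ≤ len θ w a b := abs_nonneg _

section Pack

variable {θ : ℝ} {m M : ℕ}

set_option maxHeartbeats 2000000 in
lemma pack (hθ0 : 0 < θ) (hmθ : θ * θ * (m : ℝ) = 1) (hm1 : 1 ≤ m) (hmM : m ≤ M)
    (w : List ℕ) (hw : ∀ ℓ ∈ w, m ≤ ℓ ∧ ℓ ≤ M) :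
    ∃ p p' q q' : ℝ,
      (∀ t : ℝ, 0 ≤ t → nest θ w t = (p + p' * t) / (q + q' * t)) ∧
      1 ≤ q ∧ 0 ≤ q' ∧ q' ≤ θ * q ∧
      ((m : ℝ)) ^ w.length ≤ q ^ 2 ∧
      q * (q + θ * q') ≤ (((M : ℝ) + 1) * ((M : ℝ) + 2) / m) ^ w.length ∧
      (p' * q - p * q' = 1 ∨ p' * q - p * q' = -1) := by
  have hm0 : (0:ℝ) < m := by exact_mod_cast hm1
  have hm1' : (1:ℝ) ≤ m := by exact_mod_cast hm1
  have hθm1 : 1 ≤ θ * m := by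
    have e : (θ * m) ^ 2 = (m:ℝ) := by linear_combination (m:ℝ) * hmθ
    nlinarith [mul_pos hθ0 hm0]
  induction w with
  | nil =>
    refine ⟨0, 1, 1, 0, ?_, le_refl _, le_refl _, by positivity, by norm_num, by norm_num, ?_⟩
    · intro t ht; simp
    · left; ring
  | cons ℓ w ih =>
    obtain ⟨p, p', q, q', hn, hq1, hq'0, hq'θ, hql, hqu, hdet⟩ :=
      ih (fun ℓ' h' => hw ℓ' (List.mem_cons_of_mem _ h'))
    have hℓm : (m : ℝ) ≤ (ℓ : ℝ) := by exact_mod_cast (hw ℓ List.mem_cons_self).1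
    have hℓM : (ℓ : ℝ) ≤ (M : ℝ) := by exact_mod_cast (hw ℓ List.mem_cons_self).2
    have hℓ0 : (0:ℝ) < ℓ := lt_of_lt_of_le hm0 hℓm
    have hθℓ1 : 1 ≤ θ * ℓ := le_trans hθm1 (by nlinarith)
    have hq0 : (0:ℝ) < q := lt_of_lt_of_le zero_lt_one hq1
    have e4 : θ * (θ * (ℓ:ℝ)) * m = ℓ := by linear_combination (ℓ:ℝ) * hmθ
    have h5 : 1 ≤ θ * (θ * (ℓ:ℝ)) := by nlinarith
    refine ⟨p * (θ * ℓ) + p', p, q * (θ * ℓ) + q', q, ?_, ?_, le_of_lt hq0, ?_, ?_, ?_, ?_⟩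
    · intro t ht
      have hd : (0:ℝ) < θ * ℓ + t := by linarith
      have hd' : (0:ℝ) < q + q' * (1 / (θ * ℓ + t)) := by positivity
      have hD : (0:ℝ) < q * (θ * ℓ) + q' + q * t := by nlinarith
      rw [nest_cons, hn _ (by positivity)]
      rw [div_eq_div_iff (ne_of_gt hd') (by nlinarith : q * (θ * ℓ) + q' + q * t ≠ 0)]
      field_simp
      ring
    · nlinarith
    · -- q ≤ θ * (q * (θ * ℓ) + q')
      nlinarith [mul_nonneg hθ0.le hq'0, mul_le_mul_of_nonneg_right h5 hq0.le]
    · -- m ^ (n+1) ≤ (q * (θ * ℓ) + q') ^ 2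
      have h1 : (m:ℝ) ≤ (θ * ℓ)^2 := by
        have e : (θ * (ℓ:ℝ))^2 * m = (ℓ:ℝ)^2 := by linear_combination (ℓ:ℝ)^2 * hmθ
        nlinarith [mul_le_mul hℓm hℓm hm0.le (le_trans hm0.le hℓm)]
      have key : (m:ℝ) ^ w.length * m ≤ (q * (θ * ℓ))^2 := by
        have := mul_le_mul hql h1 hm0.le (sq_nonneg q)
        nlinarith [this]
      have h2 : ((m:ℝ)) ^ (ℓ :: w).length = (m:ℝ) ^ w.length * m := by
        rw [List.length_cons, pow_succ]
      rw [h2]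
      nlinarith [key, sq_nonneg q', mul_nonneg (mul_nonneg hq0.le
        (mul_nonneg hθ0.le hℓ0.le)) hq'0]
    · -- upper bound
      have hKpos : (0:ℝ) < ((M : ℝ) + 1) * ((M : ℝ) + 2) / m := by positivity
      have hstep : (q * (θ * ℓ) + q') * ((q * (θ * ℓ) + q') + θ * q)
          ≤ (((M : ℝ) + 1) * ((M : ℝ) + 2) / m) * (q * (q + θ * q')) := by
        rw [div_mul_eq_mul_div, le_div_iff₀ hm0]
        have E1 : (m:ℝ) * ((q * (θ * ℓ)) * (q * (θ * ℓ))) = (ℓ:ℝ) * ℓ * (q * q) := by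
          linear_combination (ℓ:ℝ) * ℓ * q * q * hmθ
        have E2 : (m:ℝ) * θ * ((q * q) * (θ * ℓ)) = (ℓ:ℝ) * (q * q) := by
          linear_combination (ℓ:ℝ) * q * q * hmθ
        have T3 : 2 * ((m:ℝ) * ((q * q') * (θ * ℓ))) ≤ 2 * ((ℓ:ℝ) * (q * q)) := by
          have h := mul_le_mul_of_nonneg_left hq'θ
            (show (0:ℝ) ≤ 2 * (m * (θ * ℓ) * q) by positivity)
          nlinarith [h]
        have T4 : (m:ℝ) * (q' * q') ≤ q * q := by
          have h := mul_le_mul hq'θ hq'θ hq'0 (by positivity : (0:ℝ) ≤ θ * q)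
          have e : (m:ℝ) * ((θ * q) * (θ * q)) = q * q := by linear_combination q * q * hmθ
          nlinarith [mul_le_mul_of_nonneg_left h hm0.le]
        have T5 : (m:ℝ) * θ * (q * q') ≤ q * q := by
          have h := mul_le_mul_of_nonneg_left hq'θ
            (show (0:ℝ) ≤ m * θ * q by positivity)
          have e : (m:ℝ) * θ * (q * (θ * q)) = q * q := by linear_combination q * q * hmθ
          nlinarith [h]
        have HM : ((ℓ:ℝ) + 1) * ((ℓ:ℝ) + 2) * (q * q)
            ≤ ((M:ℝ) + 1) * ((M:ℝ) + 2) * (q * q) := by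
          have h : ((ℓ:ℝ) + 1) * ((ℓ:ℝ) + 2) ≤ ((M:ℝ) + 1) * ((M:ℝ) + 2) := by nlinarith
          nlinarith [mul_pos hq0 hq0]
        have hqq' : 0 ≤ ((M:ℝ) + 1) * ((M:ℝ) + 2) * (θ * (q * q')) := by positivity
        nlinarith [E1, E2, T3, T4, T5, HM, hqq']
      calc (q * (θ * ℓ) + q') * ((q * (θ * ℓ) + q') + θ * q)
          ≤ (((M : ℝ) + 1) * ((M : ℝ) + 2) / m) * (q * (q + θ * q')) := hstep
        _ ≤ (((M : ℝ) + 1) * ((M : ℝ) + 2) / m) * ((((M : ℝ) + 1) * ((M : ℝ) + 2) / m) ^ w.length) :=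
            mul_le_mul_of_nonneg_left hqu (le_of_lt hKpos)
        _ = (((M : ℝ) + 1) * ((M : ℝ) + 2) / m) ^ (ℓ :: w).length := by
            rw [List.length_cons, pow_succ]; ring
    · rcases hdet with h | h
      · right; linear_combination -h
      · left; linear_combination -h

/-- Version with the distance formula. -/
lemma pack2 (hθ0 : 0 < θ) (hmθ : θ * θ * (m : ℝ) = 1) (hm1 : 1 ≤ m) (hmM : m ≤ M)
    (w : List ℕ) (hw : ∀ ℓ ∈ w, m ≤ ℓ ∧ ℓ ≤ M) :
    ∃ q q' : ℝ,
      1 ≤ q ∧ 0 ≤ q' ∧ q' ≤ θ * q ∧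
      ((m : ℝ)) ^ w.length ≤ q ^ 2 ∧
      q * (q + θ * q') ≤ (((M : ℝ) + 1) * ((M : ℝ) + 2) / m) ^ w.length ∧
      (∀ a b : ℝ, 0 ≤ a → a ≤ b →
        len θ w a b = (b - a) / ((q + q' * a) * (q + q' * b))) := by
  obtain ⟨p, p', q, q', hn, hq1, hq'0, hq'θ, hql, hqu, hdet⟩ :=
    pack hθ0 hmθ hm1 hmM w hw
  refine ⟨q, q', hq1, hq'0, hq'θ, hql, hqu, fun a b ha hab => ?_⟩
  have hb : 0 ≤ b := le_trans ha hab
  have hA : (0:ℝ) < q + q' * a := by nlinarith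
  have hB : (0:ℝ) < q + q' * b := by nlinarith
  have e : nest θ w b - nest θ w a
      = ((b - a) * (p' * q - p * q')) / ((q + q' * a) * (q + q' * b)) := by
    rw [hn a ha, hn b hb]
    field_simp
    ring
  rcases hdet with h | h
  · rw [len, e, h, mul_one, abs_of_nonneg (div_nonneg (sub_nonneg.2 hab) (mul_pos hA hB).le)]
  · rw [len, e, h]
    have e2 : (b - a) * (-1:ℝ) / ((q + q' * a) * (q + q' * b))
        = -((b - a) / ((q + q' * a) * (q + q' * b))) := by ring
    rw [e2, abs_neg, abs_of_nonneg (div_nonneg (sub_nonneg.2 hab) (mul_pos hA hB).le)]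

lemma len_split (hθ0 : 0 < θ) (hmθ : θ * θ * (m : ℝ) = 1) (hm1 : 1 ≤ m) (hmM : m ≤ M)
    (w : List ℕ) (hw : ∀ ℓ ∈ w, m ≤ ℓ ∧ ℓ ≤ M) {a b c : ℝ}
    (ha : 0 ≤ a) (hab : a ≤ b) (hbc : b ≤ c) :
    len θ w a c = len θ w a b + len θ w b c := by
  obtain ⟨q, q', hq1, hq'0, hq'θ, hql, hqu, hf⟩ := pack2 hθ0 hmθ hm1 hmM w hw
  have hb : 0 ≤ b := le_trans ha hab
  have hA : (0:ℝ) < q + q' * a := by nlinarith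
  have hB : (0:ℝ) < q + q' * b := by nlinarith
  have hC : (0:ℝ) < q + q' * c := by nlinarith
  rw [hf a c ha (le_trans hab hbc), hf a b ha hab, hf b c hb hbc]
  rw [div_add_div _ _ (mul_pos hA hB).ne' (mul_pos hB hC).ne',
    div_eq_div_iff (mul_pos hA hC).ne' (mul_pos (mul_pos hA hB) (mul_pos hB hC)).ne']
  ring

lemma len_zero_ub (hθ0 : 0 < θ) (hmθ : θ * θ * (m : ℝ) = 1) (hm1 : 1 ≤ m) (hmM : m ≤ M)
    (w : List ℕ) (hw : ∀ ℓ ∈ w, m ≤ ℓ ∧ ℓ ≤ M) :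
    len θ w 0 θ ≤ θ / (m : ℝ) ^ w.length := by
  obtain ⟨q, q', hq1, hq'0, hq'θ, hql, hqu, hf⟩ := pack2 hθ0 hmθ hm1 hmM w hw
  rw [hf 0 θ le_rfl hθ0.le]
  have hq0 : (0:ℝ) < q := lt_of_lt_of_le zero_lt_one hq1
  have h1 : (m:ℝ) ^ w.length ≤ (q + q' * 0) * (q + q' * θ) := by nlinarith
  have h2 : (0:ℝ) < (m:ℝ) ^ w.length := by positivity
  rw [sub_zero]
  exact div_le_div_of_nonneg_left hθ0.le h2 h1

lemma len_zero_lb (hθ0 : 0 < θ) (hmθ : θ * θ * (m : ℝ) = 1) (hm1 : 1 ≤ m) (hmM : m ≤ M)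
    (w : List ℕ) (hw : ∀ ℓ ∈ w, m ≤ ℓ ∧ ℓ ≤ M) :
    θ / ((((M : ℝ) + 1) * ((M : ℝ) + 2) / m) ^ w.length) ≤ len θ w 0 θ := by
  obtain ⟨q, q', hq1, hq'0, hq'θ, hql, hqu, hf⟩ := pack2 hθ0 hmθ hm1 hmM w hw
  rw [hf 0 θ le_rfl hθ0.le, sub_zero]
  have hq0 : (0:ℝ) < q := lt_of_lt_of_le zero_lt_one hq1
  have hden : (0:ℝ) < (q + q' * 0) * (q + q' * θ) := by nlinarith
  have h1 : (q + q' * 0) * (q + q' * θ) ≤ (((M : ℝ) + 1) * ((M : ℝ) + 2) / m) ^ w.length := by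
    calc (q + q' * 0) * (q + q' * θ) = q * (q + θ * q') := by ring
      _ ≤ _ := hqu
  exact div_le_div_of_nonneg_left hθ0.le hden h1

lemma len_tail_ub (hθ0 : 0 < θ) (hmθ : θ * θ * (m : ℝ) = 1) (hm1 : 1 ≤ m) (hmM : m ≤ M)
    (w : List ℕ) (hw : ∀ ℓ ∈ w, m ≤ ℓ ∧ ℓ ≤ M) :
    len θ w (1 / (θ * ((M : ℝ) + 1))) θ
      ≤ (1 - (m : ℝ) / ((M : ℝ) + 1)) * len θ w 0 θ := by
  obtain ⟨q, q', hq1, hq'0, hq'θ, hql, hqu, hf⟩ := pack2 hθ0 hmθ hm1 hmM w hw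
  have hm0 : (0:ℝ) < m := by exact_mod_cast hm1
  have hM1 : (0:ℝ) < (M:ℝ) + 1 := by positivity
  set d : ℝ := 1 / (θ * ((M : ℝ) + 1)) with hd
  have hd0 : 0 < d := by positivity
  have hdθ : d ≤ θ := by
    rw [hd, div_le_iff₀ (by positivity)]
    have hmM' : (m:ℝ) ≤ M := by exact_mod_cast hmM
    nlinarith
  have hq0 : (0:ℝ) < q := lt_of_lt_of_le zero_lt_one hq1
  rw [hf d θ hd0.le hdθ, hf 0 θ le_rfl hθ0.le, sub_zero]
  have hd2 : d = (m:ℝ) * θ / ((M:ℝ) + 1) := by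
    rw [hd, div_eq_div_iff (by positivity) hM1.ne']
    linear_combination (-((M:ℝ)+1)) * hmθ
  have hfrac : 1 - (m : ℝ) / ((M : ℝ) + 1) = (θ - d) / θ := by
    rw [hd2]
    field_simp
  rw [hfrac]
  have hA : (0:ℝ) < q + q' * 0 := by nlinarith
  have hB : (0:ℝ) < q + q' * d := by nlinarith
  have hC : (0:ℝ) < q + q' * θ := by nlinarith
  rw [div_mul_div_comm]
  rw [div_le_div_iff₀ (by positivity) (by positivity)]
  have h1 : (q + q' * 0) * (q + q' * θ) ≤ (q + q' * d) * (q + q' * θ) := by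
    nlinarith [mul_nonneg (mul_nonneg hq'0 hd0.le) hC.le]
  nlinarith [mul_le_mul_of_nonneg_left h1 (mul_nonneg (sub_nonneg.2 hdθ) hθ0.le),
    mul_pos hB hC, sub_nonneg.2 hdθ]

lemma nest_mem_uIcc (hθ0 : 0 < θ) (hmθ : θ * θ * (m : ℝ) = 1) (hm1 : 1 ≤ m) (hmM : m ≤ M)
    (w : List ℕ) (hw : ∀ ℓ ∈ w, m ≤ ℓ ∧ ℓ ≤ M) {t : ℝ} (ht : t ∈ Set.Icc 0 θ) :
    nest θ w t ∈ Set.uIcc (nest θ w 0) (nest θ w θ) := by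
  obtain ⟨p, p', q, q', hn, hq1, hq'0, hq'θ, hql, hqu, hdet⟩ := pack hθ0 hmθ hm1 hmM w hw
  obtain ⟨ht0, htθ⟩ := ht
  have key : ∀ a b : ℝ, 0 ≤ a → a ≤ b →
      nest θ w b - nest θ w a
        = ((b - a) * (p' * q - p * q')) / ((q + q' * a) * (q + q' * b)) := by
    intro a b ha hab
    have hb : 0 ≤ b := le_trans ha hab
    have hA : (0:ℝ) < q + q' * a := by nlinarith
    have hB : (0:ℝ) < q + q' * b := by nlinarith
    rw [hn a ha, hn b hb]
    field_simp
    ring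
  have hA : (0:ℝ) < q + q' * 0 := by nlinarith
  have hB : (0:ℝ) < q + q' * t := by nlinarith
  have hC : (0:ℝ) < q + q' * θ := by nlinarith
  rcases hdet with h | h
  · refine Set.mem_uIcc.2 (Or.inl ⟨?_, ?_⟩)
    · have := key 0 t le_rfl ht0
      rw [h, mul_one] at this
      nlinarith [div_nonneg (sub_nonneg.2 ht0) (mul_pos hA hB).le]
    · have := key t θ ht0 htθ
      rw [h, mul_one] at this
      nlinarith [div_nonneg (sub_nonneg.2 htθ) (mul_pos hB hC).le]
  · refine Set.mem_uIcc.2 (Or.inr ⟨?_, ?_⟩)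
    · have := key t θ ht0 htθ
      rw [h] at this
      have h2 : ((θ - t) * (-1:ℝ)) / ((q + q' * t) * (q + q' * θ)) ≤ 0 := by
        apply div_nonpos_of_nonpos_of_nonneg
        · nlinarith
        · positivity
      nlinarith
    · have := key 0 t le_rfl ht0
      rw [h] at this
      have h2 : ((t - 0) * (-1:ℝ)) / ((q + q' * 0) * (q + q' * t)) ≤ 0 := by
        apply div_nonpos_of_nonpos_of_nonneg
        · nlinarith
        · positivity
      nlinarith

end Pack

end XMaux

namespace XMaux

section Words

variable {θ : ℝ} {m M : ℕ}

def words (m M : ℕ) : ℕ → Finset (List ℕ)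
  | 0 => {[]}
  | n + 1 => ((words m M n) ×ˢ Finset.Icc m M).image fun p => p.2 :: p.1

lemma words_spec (m M n : ℕ) (w : List ℕ) (hw : w ∈ words m M n) :
    w.length = n ∧ ∀ ℓ ∈ w, m ≤ ℓ ∧ ℓ ≤ M := by
  induction n generalizing w with
  | zero =>
    simp only [words, Finset.mem_singleton] at hw
    subst hw; simp
  | succ n ih =>
    rw [words, Finset.mem_image] at hw
    obtain ⟨p, hp, rfl⟩ := hw
    rw [Finset.mem_product] at hp
    have h1 := ih p.1 hp.1
    refine ⟨by simp [h1.1], ?_⟩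
    intro ℓ hℓ
    rcases List.mem_cons.1 hℓ with h | hmem
    · subst h
      exact Finset.mem_Icc.1 hp.2
    · exact h1.2 ℓ hmem

/-- the point `1/(θ k)`. -/
def xr (θ : ℝ) (k : ℕ) : ℝ := 1 / (θ * k)

lemma xr_pos (hθ0 : 0 < θ) {k : ℕ} (hk : 1 ≤ k) : 0 < xr θ k := by
  have : (1:ℝ) ≤ k := by exact_mod_cast hk
  unfold xr; positivity

lemma xr_anti (hθ0 : 0 < θ) {k k' : ℕ} (hk : 1 ≤ k) (hkk : k ≤ k') : xr θ k' ≤ xr θ k := by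
  have h1 : (1:ℝ) ≤ k := by exact_mod_cast hk
  have h2 : (k:ℝ) ≤ k' := by exact_mod_cast hkk
  unfold xr
  apply one_div_le_one_div_of_le (by positivity)
  nlinarith

lemma xr_le_theta (hθ0 : 0 < θ) (hmθ : θ * θ * (m : ℝ) = 1) (hm1 : 1 ≤ m)
    {k : ℕ} (hk : m ≤ k) : xr θ k ≤ θ := by
  have h1 : (m:ℝ) ≤ k := by exact_mod_cast hk
  have hm0 : (0:ℝ) < m := by exact_mod_cast hm1
  have hk0 : (0:ℝ) < k := by linarith
  unfold xr
  rw [div_le_iff₀ (by positivity)]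
  nlinarith

lemma xr_m (hθ0 : 0 < θ) (hmθ : θ * θ * (m : ℝ) = 1) (hm1 : 1 ≤ m) : xr θ m = θ := by
  have hm0 : (0:ℝ) < m := by exact_mod_cast hm1
  unfold xr
  rw [eq_comm, eq_div_iff (by positivity)]
  linear_combination hmθ

lemma telescope (hθ0 : 0 < θ) (hmθ : θ * θ * (m : ℝ) = 1) (hm1 : 1 ≤ m) (hmM : m ≤ M)
    (w : List ℕ) (hw : ∀ ℓ ∈ w, m ≤ ℓ ∧ ℓ ≤ M) (j : ℕ) :
    ∑ ℓ ∈ Finset.Icc m (m + j), len θ w (xr θ (ℓ + 1)) (xr θ ℓ)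
      = len θ w (xr θ (m + j + 1)) θ := by
  induction j with
  | zero =>
    rw [Nat.add_zero, Finset.Icc_self, Finset.sum_singleton, xr_m hθ0 hmθ hm1]
  | succ j ih =>
    have hstep : m + (j + 1) = (m + j) + 1 := rfl
    rw [hstep, Finset.sum_Icc_succ_top (by omega), ih]
    have ha : 0 < xr θ (m + j + 1 + 1) := xr_pos hθ0 (by omega)
    have hab : xr θ (m + j + 1 + 1) ≤ xr θ (m + j + 1) := xr_anti hθ0 (by omega) (by omega)
    have hbθ : xr θ (m + j + 1) ≤ θ := xr_le_theta hθ0 hmθ hm1 (by omega)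
    have hsplit := len_split hθ0 hmθ hm1 hmM w hw ha.le hab hbθ
    linarith [hsplit]

lemma len_cons_eq (hθ0 : 0 < θ) (w : List ℕ) (ℓ : ℕ) :
    len θ (ℓ :: w) 0 θ = len θ w (xr θ (ℓ + 1)) (xr θ ℓ) := by
  simp only [len, nest_cons]
  rw [show θ * (ℓ:ℝ) + 0 = θ * ((ℓ:ℕ):ℝ) by ring]
  have e2 : θ * (ℓ:ℝ) + θ = θ * (((ℓ + 1 : ℕ)):ℝ) := by push_cast; ring
  rw [e2]
  have e3 : (1:ℝ) / (θ * ((ℓ:ℕ):ℝ)) = xr θ ℓ := rfl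
  have e4 : (1:ℝ) / (θ * (((ℓ+1:ℕ)):ℝ)) = xr θ (ℓ+1) := rfl
  rw [e3, e4, abs_sub_comm]

lemma sum_cons_le (hθ0 : 0 < θ) (hmθ : θ * θ * (m : ℝ) = 1) (hm1 : 1 ≤ m) (hmM : m ≤ M)
    (w : List ℕ) (hw : ∀ ℓ ∈ w, m ≤ ℓ ∧ ℓ ≤ M) :
    ∑ ℓ ∈ Finset.Icc m M, len θ (ℓ :: w) 0 θ
      ≤ (1 - (m : ℝ) / ((M : ℝ) + 1)) * len θ w 0 θ := by
  have hconv : ∀ ℓ ∈ Finset.Icc m M, len θ (ℓ :: w) 0 θ = len θ w (xr θ (ℓ + 1)) (xr θ ℓ) :=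
    fun ℓ _ => len_cons_eq hθ0 w ℓ
  rw [Finset.sum_congr rfl hconv]
  have hMm : m + (M - m) = M := by omega
  have htel := telescope hθ0 hmθ hm1 hmM w hw (M - m)
  rw [hMm] at htel
  rw [htel]
  have hxM : xr θ (M + 1) = 1 / (θ * ((M : ℝ) + 1)) := by
    unfold xr; push_cast; ring_nf
  rw [hxM]
  exact len_tail_ub hθ0 hmθ hm1 hmM w hw

lemma sum_words_le (hθ0 : 0 < θ) (hmθ : θ * θ * (m : ℝ) = 1) (hm1 : 1 ≤ m) (hmM : m ≤ M) :
    ∀ n : ℕ, ∑ w ∈ words m M n, len θ w 0 θ ≤ θ * (1 - (m : ℝ) / ((M : ℝ) + 1)) ^ n := by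
  have hc0 : 0 ≤ 1 - (m : ℝ) / ((M : ℝ) + 1) := by
    have h1 : (m:ℝ) ≤ (M:ℝ) + 1 := by
      have : (m:ℝ) ≤ M := by exact_mod_cast hmM
      linarith
    have h2 : (m:ℝ) / ((M:ℝ) + 1) ≤ 1 := by
      rw [div_le_one (by positivity)]; exact h1
    linarith
  intro n
  induction n with
  | zero =>
    simp [words, len, abs_of_nonneg hθ0.le]
  | succ n ih =>
    rw [words]
    rw [Finset.sum_image (fun p _ p' _ h => by
      obtain ⟨h1, h2⟩ := List.cons.injEq _ _ _ _ ▸ h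
      exact Prod.ext h2 h1)]
    rw [Finset.sum_product]
    calc ∑ w ∈ words m M n, ∑ ℓ ∈ Finset.Icc m M, len θ (ℓ :: w) 0 θ
        ≤ ∑ w ∈ words m M n, (1 - (m : ℝ) / ((M : ℝ) + 1)) * len θ w 0 θ :=
          Finset.sum_le_sum fun w hwmem =>
            sum_cons_le hθ0 hmθ hm1 hmM w (words_spec m M n w hwmem).2
      _ = (1 - (m : ℝ) / ((M : ℝ) + 1)) * ∑ w ∈ words m M n, len θ w 0 θ := by
          rw [Finset.mul_sum]
      _ ≤ (1 - (m : ℝ) / ((M : ℝ) + 1)) * (θ * (1 - (m : ℝ) / ((M : ℝ) + 1)) ^ n) :=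
          mul_le_mul_of_nonneg_left ih hc0
      _ = θ * (1 - (m : ℝ) / ((M : ℝ) + 1)) ^ (n + 1) := by ring

end Words

variable {θ : ℝ} {m M : ℕ}

lemma cover (hθ0 : 0 < θ) (hm1 : 1 ≤ m) {x : ℝ}
    (hx : x ∈ XMset θ m M) (n : ℕ) :
    ∃ w ∈ words m M n,
      (gaussMap θ)^[n] x ∈ Set.Icc 0 θ ∧ x = nest θ w ((gaussMap θ)^[n] x) := by
  obtain ⟨hxI, hxirr, hxdig⟩ := hx
  induction n with
  | zero => exact ⟨[], by simp [words], by simpa using hxI, by simp⟩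
  | succ n ih =>
    obtain ⟨w, hwmem, htI, hxe⟩ := ih
    set t : ℝ := (gaussMap θ)^[n] x with htdef
    have hdig := hxdig (n + 1) (by omega)
    have hdigeq : digit θ x (n + 1) = ⌊1 / (θ * t)⌋ := by
      simp [digit, htdef]
    rw [hdigeq] at hdig
    have hfl1 : (1 : ℤ) ≤ ⌊1 / (θ * t)⌋ := le_trans (by exact_mod_cast hm1) hdig.1
    have hy1 : (1 : ℝ) ≤ 1 / (θ * t) := by exact_mod_cast Int.le_floor.1 hfl1
    have hθt : 0 < θ * t := by
      rcases lt_trichotomy (θ * t) 0 with h | h | h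
      · exfalso
        have : 1 / (θ * t) < 0 := div_neg_of_pos_of_neg one_pos h
        linarith
      · exfalso; rw [h] at hy1; norm_num at hy1
      · exact h
    have ht0 : 0 < t := by nlinarith
    have htne : t ≠ 0 := ne_of_gt ht0
    have hgt : gaussMap θ t = 1 / t - θ * ⌊1 / (θ * t)⌋ := by rw [gaussMap, if_neg htne]
    set ℓ : ℕ := (⌊1 / (θ * t)⌋).toNat with hℓdef
    have hℓcast : ((ℓ : ℤ)) = ⌊1 / (θ * t)⌋ := Int.toNat_of_nonneg (by linarith)
    have hℓR : ((ℓ : ℝ)) = ((⌊1 / (θ * t)⌋ : ℤ) : ℝ) := by exact_mod_cast hℓcast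
    have hℓm : m ≤ ℓ := by
      have : (m : ℤ) ≤ (ℓ : ℤ) := hℓcast ▸ hdig.1
      exact_mod_cast this
    have hℓM : ℓ ≤ M := by
      have : (ℓ : ℤ) ≤ (M : ℤ) := hℓcast ▸ hdig.2
      exact_mod_cast this
    have hit : (gaussMap θ)^[n + 1] x = gaussMap θ t := by
      rw [Function.iterate_succ_apply']
    have hyfact : θ * (1 / (θ * t)) = 1 / t := by field_simp
    have hfloorle : ((⌊1 / (θ * t)⌋ : ℤ) : ℝ) ≤ 1 / (θ * t) := Int.floor_le _
    have hfloorgt : 1 / (θ * t) < ((⌊1 / (θ * t)⌋ : ℤ) : ℝ) + 1 := Int.lt_floor_add_one _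
    have ht'0 : 0 ≤ gaussMap θ t := by
      rw [hgt]
      nlinarith [mul_le_mul_of_nonneg_left hfloorle hθ0.le]
    have ht'θ : gaussMap θ t ≤ θ := by
      rw [hgt]
      nlinarith [mul_lt_mul_of_pos_left hfloorgt hθ0]
    have hnest : nest θ (ℓ :: w) (gaussMap θ t) = x := by
      rw [nest_cons]
      have e : θ * (ℓ : ℝ) + gaussMap θ t = 1 / t := by
        rw [hgt, hℓR]; ring
      rw [e, one_div_one_div]
      exact hxe.symm
    refine ⟨ℓ :: w, ?_, ?_, ?_⟩
    · rw [words, Finset.mem_image]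
      exact ⟨(w, ℓ), Finset.mem_product.2 ⟨hwmem, Finset.mem_Icc.2 ⟨hℓm, hℓM⟩⟩, rfl⟩
    · rw [hit]; exact ⟨ht'0, ht'θ⟩
    · rw [hit, hnest]


end XMaux

namespace XMaux

set_option maxHeartbeats 1000000 in
theorem main (θ : ℝ) (m : ℕ) (hm : 0 < m) (hmns : ¬ IsSquare m)
    (hθ : θ ∈ Set.Ioo (0 : ℝ) 1) (hθirr : Irrational θ) (hθ2 : θ ^ 2 = 1 / m)
    (M : ℕ) (hM : 2 * m + 1 < M) :
    dimH (XMset θ m M) ≤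
      ENNReal.ofReal
        (1 - (m : ℝ) / ((M : ℝ) + 2) *
          (1 / Real.log (2 * (M : ℝ) * ((M : ℝ) + 1) / (m : ℝ)))) := by
  classical
  obtain ⟨hθpos0, hθlt10⟩ := hθ
  have hθpos : 0 < θ := hθpos0
  have hθlt1 : θ < 1 := hθlt10
  set tset : ∀ n : ℕ, {w : List ℕ // w ∈ XMaux.words m M n} → Set ℝ :=
    fun n i => Set.uIcc (XMaux.nest θ i.1 0) (XMaux.nest θ i.1 θ) with htsetdef
  have hm1 : 1 ≤ m := hm
  have hm0R : (0:ℝ) < m := by exact_mod_cast hm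
  have hmM : m ≤ M := by omega
  have hmθ : θ * θ * (m : ℝ) = 1 := by
    have hne : (m:ℝ) ≠ 0 := ne_of_gt hm0R
    field_simp at hθ2
    linear_combination hθ2
  have hm2 : 2 ≤ m := by
    by_contra h
    have hmeq : m = 1 := by omega
    rw [hmeq] at hmns
    exact hmns IsSquare.one
  have hMm : 2 * (m:ℝ) + 1 < M := by exact_mod_cast hM
  have hM0 : (0:ℝ) < M := by nlinarith
  set L : ℝ := Real.log (2 * (M : ℝ) * ((M : ℝ) + 1) / (m : ℝ)) with hLdef
  set ε : ℝ := (m : ℝ) / ((M : ℝ) + 2) * (1 / L) with hεdef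
  set c : ℝ := (m : ℝ) / ((M : ℝ) + 1) with hcdef
  set K : ℝ := ((M : ℝ) + 1) * ((M : ℝ) + 2) / (m : ℝ) with hKdef
  have hK0 : 0 < K := by rw [hKdef]; positivity
  have h3L : (3:ℝ) ≤ 2 * (M : ℝ) * ((M : ℝ) + 1) / (m : ℝ) := by
    rw [le_div_iff₀ hm0R]; nlinarith
  have hL1 : 1 ≤ L := by
    rw [hLdef, Real.le_log_iff_exp_le (by positivity)]
    linarith [Real.exp_one_lt_d9]
  have hL0 : 0 < L := lt_of_lt_of_le one_pos hL1
  have hε0 : 0 < ε := by rw [hεdef]; positivity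
  have hε1 : ε < 1 := by
    rw [hεdef]
    have h1 : (m:ℝ) / ((M:ℝ)+2) < 1 := by rw [div_lt_one (by positivity)]; nlinarith
    have h2 : 1 / L ≤ 1 := by rw [div_le_one hL0]; exact hL1
    nlinarith [show (0:ℝ) < (m:ℝ)/((M:ℝ)+2) by positivity, show (0:ℝ) < 1/L by positivity]
  have hc0 : 0 < c := by rw [hcdef]; positivity
  have hc1 : c < 1 := by rw [hcdef, div_lt_one (by positivity)]; nlinarith
  set r : ℝ := K ^ ε * (1 - c) with hrdef
  have hr0 : 0 < r := mul_pos (Real.rpow_pos_of_pos hK0 ε) (by linarith)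
  have hr1 : r < 1 := by
    have hlogK : Real.log K ≤ L := by
      rw [hLdef, hKdef]
      have harg : ((M:ℝ)+1) * ((M:ℝ)+2) / m ≤ 2 * (M:ℝ) * ((M:ℝ)+1) / m :=
        (div_le_div_iff_of_pos_right hm0R).2
          (by nlinarith [show (2:ℝ) ≤ m by exact_mod_cast hm2])
      exact Real.log_le_log (by positivity) harg
    have hεK : ε * Real.log K ≤ (m:ℝ) / ((M:ℝ)+2) := by
      calc ε * Real.log K ≤ ε * L := mul_le_mul_of_nonneg_left hlogK hε0.le
        _ = (m:ℝ)/((M:ℝ)+2) := by rw [hεdef]; field_simp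
    have hlog1c : Real.log (1 - c) ≤ -c := by
      have := Real.log_le_sub_one_of_pos (show (0:ℝ) < 1 - c by linarith)
      linarith
    have hcc : (m:ℝ)/((M:ℝ)+2) < c := by
      rw [hcdef]
      exact div_lt_div_of_pos_left hm0R (by positivity) (by linarith)
    have hlogr : Real.log r < 0 := by
      rw [hrdef, Real.log_mul (ne_of_gt (Real.rpow_pos_of_pos hK0 ε))
        (ne_of_gt (show (0:ℝ) < 1 - c by linarith)), Real.log_rpow hK0]
      linarith
    calc r = Real.exp (Real.log r) := (Real.exp_log hr0).symm
      _ < Real.exp 0 := Real.exp_lt_exp.2 hlogr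
      _ = 1 := Real.exp_zero
  set s₀ : ℝ := 1 - ε with hs₀def
  have hs₀0 : 0 < s₀ := by rw [hs₀def]; linarith
  have hdiameq : ∀ n : ℕ, ∀ w ∈ XMaux.words m M n,
      EMetric.diam (Set.uIcc (XMaux.nest θ w 0) (XMaux.nest θ w θ))
        = ENNReal.ofReal (XMaux.len θ w 0 θ) := by
    intro n w _
    have h1 : Set.uIcc (XMaux.nest θ w 0) (XMaux.nest θ w θ)
        = Set.Icc (XMaux.nest θ w 0 ⊓ XMaux.nest θ w θ)
            (XMaux.nest θ w 0 ⊔ XMaux.nest θ w θ) := rfl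
    rw [h1]; show Metric.ediam _ = _; rw [Real.ediam_Icc]
    rcases le_total (XMaux.nest θ w 0) (XMaux.nest θ w θ) with h | h
    · rw [max_eq_right h, min_eq_left h]
      simp only [XMaux.len, abs_of_nonneg (sub_nonneg.2 h)]
    · rw [max_eq_left h, min_eq_right h]
      simp only [XMaux.len, abs_of_nonpos (sub_nonpos.2 h)]
      congr 1
      ring
  have hθhalf : ∀ n : ℕ, ∀ w ∈ XMaux.words m M n, XMaux.len θ w 0 θ ≤ θ * (1/2)^n := by
    intro n w hw
    obtain ⟨hlenw, hent⟩ := XMaux.words_spec m M n w hw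
    have h1 := XMaux.len_zero_ub hθpos hmθ hm1 hmM w hent
    rw [hlenw] at h1
    have h2 : (2:ℝ)^n ≤ (m:ℝ)^n := pow_le_pow_left₀ (by norm_num) (by exact_mod_cast hm2) n
    calc XMaux.len θ w 0 θ ≤ θ / (m:ℝ)^n := h1
      _ ≤ θ / 2^n := div_le_div_of_nonneg_left hθpos.le (by positivity) h2
      _ = θ * (1/2)^n := by rw [one_div, inv_pow, div_eq_mul_inv]
  have hzero : (MeasureTheory.Measure.hausdorffMeasure s₀ : MeasureTheory.Measure ℝ) (XMset θ m M) = 0 := by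
    refine le_antisymm ?_ zero_le
    have hcover : ∀ n : ℕ, XMset θ m M ⊆
        ⋃ i : {w : List ℕ // w ∈ XMaux.words m M n}, tset n i := by
      intro n x hx
      obtain ⟨w, hwmem, htI, hxe⟩ := XMaux.cover hθpos hm1 hx n
      refine Set.mem_iUnion.2 ⟨⟨w, hwmem⟩, ?_⟩
      rw [hxe]
      exact XMaux.nest_mem_uIcc hθpos hmθ hm1 hmM w (XMaux.words_spec m M n w hwmem).2 htI
    have hr' : Filter.Tendsto (fun n : ℕ => ENNReal.ofReal (θ * (1/2)^n))
        atTop (nhds 0) := by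
      have h1 : Filter.Tendsto (fun n : ℕ => θ * (1/2:ℝ)^n) atTop (nhds 0) := by
        have h0 := tendsto_pow_atTop_nhds_zero_of_lt_one
          (by norm_num : (0:ℝ) ≤ 1/2) (by norm_num : (1/2:ℝ) < 1)
        simpa using h0.const_mul θ
      have h2 := (ENNReal.continuous_ofReal.tendsto 0).comp h1
      simpa [Function.comp_def] using h2
    have hdiam : ∀ n : ℕ, ∀ i : {w : List ℕ // w ∈ XMaux.words m M n},
        EMetric.diam (tset n i) ≤ ENNReal.ofReal (θ * (1/2)^n) := by
      intro n i
      rw [show tset n i = Set.uIcc (XMaux.nest θ i.1 0) (XMaux.nest θ i.1 θ) from rfl]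
      rw [hdiameq n i.1 i.2]
      exact ENNReal.ofReal_le_ofReal (hθhalf n i.1 i.2)
    have hbound := MeasureTheory.Measure.hausdorffMeasure_le_liminf_tsum
        (ι := fun n : ℕ => {w : List ℕ // w ∈ XMaux.words m M n}) s₀ (XMset θ m M)
        (fun n => ENNReal.ofReal (θ * (1/2)^n)) hr' tset
        (Filter.Eventually.of_forall hdiam) (Filter.Eventually.of_forall hcover)
    refine le_trans hbound ?_
    have hsum : ∀ n : ℕ,
        (∑' i : {w : List ℕ // w ∈ XMaux.words m M n}, EMetric.diam (tset n i) ^ s₀)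
          ≤ ENNReal.ofReal (θ ^ s₀ * r ^ n) := by
      intro n
      rw [show (fun i : {w : List ℕ // w ∈ XMaux.words m M n} =>
            EMetric.diam (tset n i) ^ s₀)
          = fun i : {w : List ℕ // w ∈ XMaux.words m M n} =>
            (fun w : List ℕ => EMetric.diam
              (Set.uIcc (XMaux.nest θ w 0) (XMaux.nest θ w θ)) ^ s₀) i.1 from rfl]
      rw [Finset.tsum_subtype (XMaux.words m M n)
        (fun w : List ℕ => EMetric.diam
          (Set.uIcc (XMaux.nest θ w 0) (XMaux.nest θ w θ)) ^ s₀)]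
      have hterm : ∀ w ∈ XMaux.words m M n,
          EMetric.diam (Set.uIcc (XMaux.nest θ w 0) (XMaux.nest θ w θ)) ^ s₀
            = ENNReal.ofReal ((XMaux.len θ w 0 θ) ^ s₀) := by
        intro w hwm
        rw [hdiameq n w hwm, ENNReal.ofReal_rpow_of_nonneg (XMaux.len_nonneg θ w 0 θ) hs₀0.le]
      rw [Finset.sum_congr rfl hterm, ← ENNReal.ofReal_sum_of_nonneg
        (fun w _ => Real.rpow_nonneg (XMaux.len_nonneg θ w 0 θ) s₀)]
      apply ENNReal.ofReal_le_ofReal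
      have hβ : (0:ℝ) < θ / K^n := by positivity
      have hterm2 : ∀ w ∈ XMaux.words m M n,
          (XMaux.len θ w 0 θ) ^ s₀ ≤ (XMaux.len θ w 0 θ) * (θ / K^n) ^ (-ε) := by
        intro w hwm
        obtain ⟨hlenw, hent⟩ := XMaux.words_spec m M n w hwm
        have hlow := XMaux.len_zero_lb hθpos hmθ hm1 hmM w hent
        rw [hlenw, ← hKdef] at hlow
        have hlen0 : 0 < XMaux.len θ w 0 θ := lt_of_lt_of_le hβ hlow
        calc (XMaux.len θ w 0 θ) ^ s₀
            = (XMaux.len θ w 0 θ) ^ ((1:ℝ) + (-ε)) := by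
              rw [hs₀def, sub_eq_add_neg]
          _ = (XMaux.len θ w 0 θ) ^ (1:ℝ) * (XMaux.len θ w 0 θ) ^ (-ε) :=
              Real.rpow_add hlen0 _ _
          _ = (XMaux.len θ w 0 θ) * (XMaux.len θ w 0 θ) ^ (-ε) := by
              rw [Real.rpow_one]
          _ ≤ (XMaux.len θ w 0 θ) * (θ / K^n) ^ (-ε) :=
              mul_le_mul_of_nonneg_left
                (Real.rpow_le_rpow_of_nonpos hβ hlow (by linarith)) hlen0.le
      calc ∑ w ∈ XMaux.words m M n, (XMaux.len θ w 0 θ) ^ s₀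
          ≤ ∑ w ∈ XMaux.words m M n, (XMaux.len θ w 0 θ) * (θ / K^n) ^ (-ε) :=
            Finset.sum_le_sum hterm2
        _ = (θ / K^n) ^ (-ε) * ∑ w ∈ XMaux.words m M n, XMaux.len θ w 0 θ := by
            rw [← Finset.sum_mul, mul_comm]
        _ ≤ (θ / K^n) ^ (-ε) * (θ * (1 - c)^n) := by
            apply mul_le_mul_of_nonneg_left _ (Real.rpow_nonneg hβ.le _)
            have hsw := XMaux.sum_words_le hθpos hmθ hm1 hmM n
            rw [← hcdef] at hsw
            exact hsw
        _ = θ ^ s₀ * r ^ n := by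
            rw [Real.div_rpow hθpos.le (by positivity : (0:ℝ) ≤ K^n),
              Real.rpow_neg (by positivity : (0:ℝ) ≤ K^n), div_inv_eq_mul]
            have e1 : ((K^n : ℝ)) ^ ε = (K ^ ε) ^ n := by
              rw [← Real.rpow_natCast K n, ← Real.rpow_mul hK0.le, mul_comm ((n:ℕ):ℝ) ε,
                Real.rpow_mul hK0.le, Real.rpow_natCast]
            have e2 : θ ^ s₀ = θ ^ (-ε) * θ := by
              rw [hs₀def, show (1:ℝ) - ε = -ε + 1 by ring, Real.rpow_add hθpos, Real.rpow_one]
            rw [hrdef, mul_pow, e2, e1]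
            ring
    calc Filter.liminf (fun n : ℕ =>
          ∑' i : {w : List ℕ // w ∈ XMaux.words m M n}, EMetric.diam (tset n i) ^ s₀) atTop
        ≤ Filter.liminf (fun n : ℕ => ENNReal.ofReal (θ ^ s₀ * r ^ n)) atTop :=
          Filter.liminf_le_liminf (Filter.Eventually.of_forall hsum)
      _ = 0 := by
          apply Filter.Tendsto.liminf_eq
          have h1 : Filter.Tendsto (fun n : ℕ => θ ^ s₀ * r ^ n) atTop (nhds 0) := by
            have h0 := tendsto_pow_atTop_nhds_zero_of_lt_one hr0.le hr1
            simpa using h0.const_mul (θ ^ s₀)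
          have h2 := (ENNReal.continuous_ofReal.tendsto 0).comp h1
          simpa [Function.comp_def] using h2
  have hd : ((s₀.toNNReal) : ℝ) = s₀ := Real.coe_toNNReal s₀ hs₀0.le
  have hne : (MeasureTheory.Measure.hausdorffMeasure ((s₀.toNNReal) : ℝ)
      : MeasureTheory.Measure ℝ) (XMset θ m M) ≠ ⊤ := by
    rw [hd, hzero]
    exact ENNReal.zero_ne_top
  have hdim := dimH_le_of_hausdorffMeasure_ne_top hne
  exact hdim

end XMaux

/-- upper bound `dim_H(X_M) ≤ 1 − (m/(M+2))·(1/log(2M(M+1)/m))`. -/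
theorem XM_dimH_upper_bound (θ : ℝ) (m : ℕ) (hm : 0 < m) (hmns : ¬ IsSquare m)
    (hθ : θ ∈ Set.Ioo (0 : ℝ) 1) (hθirr : Irrational θ) (hθ2 : θ ^ 2 = 1 / m)
    (M : ℕ) (hM : 2 * m + 1 < M) :
    dimH (XMset θ m M) ≤
      ENNReal.ofReal
        (1 - (m : ℝ) / ((M : ℝ) + 2) *
          (1 / Real.log (2 * (M : ℝ) * ((M : ℝ) + 1) / (m : ℝ)))) :=
  XMaux.main θ m hm hmns hθ hθirr hθ2 M hM
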